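/- arXiv:2003.03370 — 2 statements merged into one kernel-verified Lean document; each statement's English description precedes it below -/
import Mathlib

section
/- For every real R > 0, every κ > 0, every natural number n and every natural number ℓ, the integral ∫₀^R (r² − R²)^n · r^(ℓ+2) · j_ℓ(κ r) dr equals (−2)^n · n! · R^(ℓ+n+2) · j_(ℓ+n+1)(κ R) / κ^(n+1), where j_ℓ denotes the spherical Bessel function of the first kind. -/
open scoped Nat
open Polynomial

/-- Spherical Bessel function of the first kind, via its power series. -/
noncomputable def sphJ (l : ℕ) (x : ℝ) : ℝ :=
  x ^ l / ((2 * l + 1)‼ : ℝ) *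
    ∑' s : ℕ, ((-1 : ℝ) ^ s / (s.factorial * (ascPochhammer ℝ s).eval ((l : ℝ) + 3 / 2))) *
      (x / 2) ^ (2 * s)

/-- Modified spherical Bessel function of the first kind, via its power series. -/
noncomputable def sphI (l : ℕ) (x : ℝ) : ℝ :=
  x ^ l / ((2 * l + 1)‼ : ℝ) *
    ∑' s : ℕ, (1 / (s.factorial * (ascPochhammer ℝ s).eval ((l : ℝ) + 3 / 2))) *
      (x / 2) ^ (2 * s)

/-- Modified spherical Bessel function of the second kind, via its closed form. -/
noncomputable def sphK (l : ℕ) (x : ℝ) : ℝ :=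
  Real.exp (-x) / x *
    ∑ s ∈ Finset.range (l + 1),
      ((l + s).factorial : ℝ) / (s.factorial * (l - s).factorial * (2 * x) ^ s)

/-! ### Auxiliary material -/

/-- Coefficient of `x ^ (l + 2*s)` in the power series of `sphJ l`. -/
noncomputable def aCoef (l s : ℕ) : ℝ :=
  (-1) ^ s /
    (((2 * l + 1)‼ : ℝ) * s.factorial * (ascPochhammer ℝ s).eval ((l : ℝ) + 3 / 2) * 4 ^ s)

lemma poch_pos (l s : ℕ) : 0 < (ascPochhammer ℝ s).eval ((l : ℝ) + 3 / 2) :=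
  ascPochhammer_pos s _ (by positivity)

lemma one_le_poch (l s : ℕ) : 1 ≤ (ascPochhammer ℝ s).eval ((l : ℝ) + 3 / 2) := by
  induction s with
  | zero => simp
  | succ s ih =>
      rw [ascPochhammer_succ_right]
      simp only [eval_mul, eval_add, eval_X, eval_natCast]
      have h1 : (0:ℝ) ≤ (l:ℝ) := Nat.cast_nonneg l
      have h2 : (0:ℝ) ≤ (s:ℝ) := Nat.cast_nonneg s
      nlinarith [ih]

lemma abs_aCoef_le (l s : ℕ) : |aCoef l s| ≤ 1 / s.factorial := by
  have hD : (1:ℝ) ≤ ((2 * l + 1)‼ : ℝ) := by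
    exact_mod_cast Nat.one_le_iff_ne_zero.mpr (Nat.doubleFactorial_pos _).ne'
  have hp := one_le_poch l s
  have hP := poch_pos l s
  have h4 : (1:ℝ) ≤ 4 ^ s := one_le_pow₀ (by norm_num)
  have hf : (1:ℝ) ≤ s.factorial := by exact_mod_cast s.factorial_pos
  have hf0 : (0:ℝ) < s.factorial := by positivity
  set P : ℝ := (ascPochhammer ℝ s).eval ((l : ℝ) + 3 / 2) with hPdef
  have hpos : (0:ℝ) < ((2 * l + 1)‼ : ℝ) * s.factorial * P * 4 ^ s :=
    mul_pos (mul_pos (mul_pos (by linarith) hf0) hP) (by positivity)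
  have key : ((s.factorial : ℝ)) ≤ ((2 * l + 1)‼ : ℝ) * s.factorial * P * 4 ^ s := by
    have h1 : (1:ℝ) ≤ ((2 * l + 1)‼ : ℝ) * P * 4 ^ s := by
      calc (1:ℝ) ≤ ((2 * l + 1)‼ : ℝ) := hD
        _ ≤ ((2 * l + 1)‼ : ℝ) * P := le_mul_of_one_le_right (by linarith) hp
        _ ≤ ((2 * l + 1)‼ : ℝ) * P * 4 ^ s :=
            le_mul_of_one_le_right (by positivity) h4
    calc ((s.factorial : ℝ)) = s.factorial * 1 := (mul_one _).symm
      _ ≤ (s.factorial : ℝ) * (((2 * l + 1)‼ : ℝ) * P * 4 ^ s) :=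
          mul_le_mul_of_nonneg_left h1 hf0.le
      _ = ((2 * l + 1)‼ : ℝ) * s.factorial * P * 4 ^ s := by ring
  rw [aCoef, abs_div, abs_pow, abs_neg, abs_one, one_pow, abs_of_pos hpos,
    div_le_div_iff₀ hpos hf0]
  nlinarith [key]

lemma nat_linear_le_pow (d s : ℕ) : d + 2 * s ≤ (d + 2) * 2 ^ s := by
  induction s with
  | zero => simp
  | succ s ih =>
      have h1 : 1 ≤ 2 ^ s := Nat.one_le_two_pow
      have h2 : (2:ℕ) ≤ (d + 2) * 2 ^ s := le_trans (by omega) (Nat.mul_le_mul_left _ h1)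
      calc d + 2 * (s + 1) = (d + 2 * s) + 2 := by ring
        _ ≤ (d + 2) * 2 ^ s + (d + 2) * 2 ^ s := Nat.add_le_add ih h2
        _ = (d + 2) * 2 ^ (s + 1) := by ring

/-- Key analytic helper: termwise differentiation of power-type series with
factorially decaying coefficients. -/
lemma hasDerivAt_tsum_pow (c : ℕ → ℝ) (hc : ∀ s, |c s| ≤ 1 / s.factorial)
    (d : ℕ) (m : ℕ → ℕ) (hm : ∀ s, m s ≤ d + 2 * s) (x : ℝ) :
    HasDerivAt (fun y : ℝ => ∑' s, c s * y ^ (m s))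
      (∑' s, c s * (m s : ℝ) * x ^ (m s - 1)) x := by
  set M : ℝ := |x| + 1 with hMdef
  have hM1 : (1:ℝ) ≤ M := by have := abs_nonneg x; simp only [hMdef]; linarith
  have hM0 : (0:ℝ) < M := by linarith
  have hxM : x ∈ Metric.ball (0:ℝ) M := by
    simp only [Metric.mem_ball, dist_zero_right, Real.norm_eq_abs, hMdef]; linarith
  refine hasDerivAt_tsum_of_isPreconnected
    (u := fun s => ((d:ℝ) + 2) * M ^ d * (2 * M ^ 2) ^ s / s.factorial)
    ?_ Metric.isOpen_ball (convex_ball (0:ℝ) M).isPreconnected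
    (g' := fun s y => c s * (m s : ℝ) * y ^ (m s - 1))
    ?_ ?_ (Metric.mem_ball_self hM0) ?_ hxM
  · apply Summable.congr ((Real.summable_pow_div_factorial (2 * M ^ 2)).mul_left
      (((d:ℝ) + 2) * M ^ d))
    intro s; rw [mul_div_assoc]
  · intro s y _
    simpa [mul_assoc] using (hasDerivAt_pow (m s) y).const_mul (c s)
  · intro s y hy
    have hyM : |y| ≤ M := by
      simp only [Metric.mem_ball, dist_zero_right, Real.norm_eq_abs] at hy; linarith
    have h1 : ‖c s * (m s : ℝ) * y ^ (m s - 1)‖ = |c s| * (m s : ℝ) * |y| ^ (m s - 1) := by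
      simp [abs_mul, abs_pow, Nat.abs_cast]
    have h2 : (m s : ℝ) ≤ ((d:ℝ) + 2) * 2 ^ s := by
      have h := (hm s).trans (nat_linear_le_pow d s)
      calc (m s : ℝ) ≤ ((d + 2) * 2 ^ s : ℕ) := by exact_mod_cast h
        _ = ((d:ℝ) + 2) * 2 ^ s := by push_cast; ring
    have h3 : |y| ^ (m s - 1) ≤ M ^ (d + 2 * s) := by
      calc |y| ^ (m s - 1) ≤ M ^ (m s - 1) := pow_le_pow_left₀ (abs_nonneg y) hyM _
        _ ≤ M ^ (d + 2 * s) :=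
            pow_le_pow_right₀ hM1 (le_trans (Nat.sub_le _ _) (hm s))
    have hms0 : (0:ℝ) ≤ (m s : ℝ) := Nat.cast_nonneg _
    have hcs0 : (0:ℝ) ≤ |c s| := abs_nonneg _
    have hfac : (0:ℝ) < 1 / s.factorial := by positivity
    calc ‖c s * (m s : ℝ) * y ^ (m s - 1)‖
        = |c s| * (m s : ℝ) * |y| ^ (m s - 1) := h1
      _ ≤ (1 / s.factorial) * (((d:ℝ) + 2) * 2 ^ s) * M ^ (d + 2 * s) := by
          have := mul_le_mul (mul_le_mul (hc s) h2 hms0 hfac.le) h3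
            (by positivity) (by positivity)
          exact this
      _ = ((d:ℝ) + 2) * M ^ d * (2 * M ^ 2) ^ s / s.factorial := by
          rw [pow_add, pow_mul, mul_pow]; ring
  · apply Summable.of_norm_bounded (g := fun s : ℕ => (1:ℝ) / s.factorial)
    · simpa using Real.summable_pow_div_factorial 1
    · intro s
      have h0 : |(0:ℝ) ^ (m s)| ≤ 1 := by
        rcases Nat.eq_zero_or_pos (m s) with h | h
        · simp [h]
        · simp [zero_pow h.ne']
      calc ‖c s * (0:ℝ) ^ (m s)‖ = |c s| * |(0:ℝ) ^ (m s)| := abs_mul _ _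
        _ ≤ (1 / s.factorial) * 1 := mul_le_mul (hc s) h0 (abs_nonneg _) (by positivity)
        _ = 1 / s.factorial := mul_one _

lemma sphJ_eq (l : ℕ) (x : ℝ) : sphJ l x = ∑' s, aCoef l s * x ^ (l + 2 * s) := by
  rw [sphJ, ← tsum_mul_left]
  refine tsum_congr fun s => ?_
  have hD : ((2 * l + 1)‼ : ℝ) ≠ 0 := by
    exact_mod_cast (Nat.doubleFactorial_pos _).ne'
  have hp : (ascPochhammer ℝ s).eval ((l : ℝ) + 3 / 2) ≠ 0 := (poch_pos l s).ne'
  have hf : ((s.factorial : ℝ)) ≠ 0 := by exact_mod_cast s.factorial_pos.ne'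
  have h2 : ((x / 2) ^ (2 * s) : ℝ) = x ^ (2 * s) / 4 ^ s := by
    rw [div_pow]
    congr 1
    rw [pow_mul]; norm_num
  rw [h2, aCoef, pow_add]
  field_simp

lemma continuous_sphJ (l : ℕ) : Continuous (sphJ l) := by
  have h : ∀ x : ℝ, HasDerivAt (fun y : ℝ => ∑' s, aCoef l s * y ^ (l + 2 * s))
      (∑' s, aCoef l s * ((l + 2 * s : ℕ) : ℝ) * x ^ (l + 2 * s - 1)) x :=
    fun x => hasDerivAt_tsum_pow (aCoef l) (abs_aCoef_le l) l (fun s => l + 2 * s)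
      (fun s => le_rfl) x
  have : Continuous (fun y : ℝ => ∑' s, aCoef l s * y ^ (l + 2 * s)) :=
    continuous_iff_continuousAt.mpr fun x => (h x).continuousAt
  convert this using 1
  funext y
  exact sphJ_eq l y

lemma aCoef_rec (l s : ℕ) : aCoef (l + 1) s * (2 * (l:ℝ) + 3 + 2 * s) = aCoef l s := by
  have hD : ((2 * (l + 1) + 1)‼ : ℝ) = (2 * (l:ℝ) + 3) * ((2 * l + 1)‼ : ℝ) := by
    have h : 2 * (l + 1) + 1 = (2 * l + 1) + 2 := by ring
    rw [h, Nat.doubleFactorial_add_two]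
    push_cast; ring
  rw [aCoef, aCoef]
  set p : ℝ := (ascPochhammer ℝ s).eval ((l : ℝ) + 3 / 2) with hpdef
  set q : ℝ := (ascPochhammer ℝ s).eval ((((l + 1 : ℕ)) : ℝ) + 3 / 2) with hqdef
  have hp : ((l:ℝ) + 3 / 2) * q = p * ((l:ℝ) + 3 / 2 + s) := by
    have h1 : ((((l + 1 : ℕ)) : ℝ) + 3 / 2) = ((l:ℝ) + 3 / 2) + 1 := by push_cast; ring
    have e2 : (ascPochhammer ℝ (s + 1)).eval ((l:ℝ) + 3 / 2)
        = ((l:ℝ) + 3 / 2) * (ascPochhammer ℝ s).eval (((l:ℝ) + 3 / 2) + 1) := by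
      rw [ascPochhammer_succ_left]; simp [eval_mul, eval_comp]
    have e3 : (ascPochhammer ℝ (s + 1)).eval ((l:ℝ) + 3 / 2)
        = (ascPochhammer ℝ s).eval ((l:ℝ) + 3 / 2) * ((l:ℝ) + 3 / 2 + s) := by
      rw [ascPochhammer_succ_right]; simp [eval_mul]
    rw [hpdef, hqdef, h1, ← e2, e3]
  have hl32 : ((l:ℝ) + 3 / 2) ≠ 0 := by positivity
  have hp0 : p ≠ 0 := (poch_pos l s).ne'
  have hq0 : q ≠ 0 := (poch_pos (l + 1) s).ne'
  have hq : q = p * ((l:ℝ) + 3 / 2 + s) / ((l:ℝ) + 3 / 2) := by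
    rw [eq_div_iff hl32]; linarith [hp]
  have hD0 : ((2 * l + 1)‼ : ℝ) ≠ 0 := by exact_mod_cast (Nat.doubleFactorial_pos _).ne'
  have hf : ((s.factorial : ℝ)) ≠ 0 := by exact_mod_cast s.factorial_pos.ne'
  rw [hD, hq]
  have hx : ((l:ℝ) + 3 / 2 + s) ≠ 0 := by positivity
  field_simp

/-- The fundamental recurrence as a derivative identity. -/
lemma key_deriv (l : ℕ) (x : ℝ) :
    HasDerivAt (fun y : ℝ => y ^ (l + 2) * sphJ (l + 1) y) (x ^ (l + 2) * sphJ l x) x := by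
  have hfun : (fun y : ℝ => y ^ (l + 2) * sphJ (l + 1) y)
      = fun y : ℝ => ∑' s, aCoef (l + 1) s * y ^ (2 * l + 3 + 2 * s) := by
    funext y
    rw [sphJ_eq, ← tsum_mul_left]
    refine tsum_congr fun s => ?_
    rw [← mul_assoc, mul_comm (y ^ (l + 2)), mul_assoc, ← pow_add]
    congr 2
    omega
  have h := hasDerivAt_tsum_pow (aCoef (l + 1)) (abs_aCoef_le (l + 1)) (2 * l + 3)
    (fun s => 2 * l + 3 + 2 * s) (fun s => le_rfl) x
  rw [hfun]
  convert h using 1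
  rw [sphJ_eq, ← tsum_mul_left]
  refine tsum_congr fun s => ?_
  have hidx : 2 * l + 3 + 2 * s - 1 = 2 * l + 2 + 2 * s := by omega
  rw [hidx]
  have hc : ((2 * l + 3 + 2 * s : ℕ) : ℝ) = 2 * (l:ℝ) + 3 + 2 * s := by push_cast; ring
  rw [hc]
  have : x ^ (l + 2) * (aCoef l s * x ^ (l + 2 * s)) = aCoef l s * x ^ (2 * l + 2 + 2 * s) := by
    rw [← mul_assoc, mul_comm (x ^ (l + 2)), mul_assoc, ← pow_add]
    congr 2
    omega
  rw [this, ← aCoef_rec l s]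

lemma key_deriv_scaled (l : ℕ) {κ : ℝ} (hκ : κ ≠ 0) (x : ℝ) :
    HasDerivAt (fun r : ℝ => r ^ (l + 2) * sphJ (l + 1) (κ * r))
      (κ * (x ^ (l + 2) * sphJ l (κ * x))) x := by
  have hin : HasDerivAt (fun r : ℝ => κ * r) κ x := by
    simpa using (hasDerivAt_id x).const_mul κ
  have h := (key_deriv l (κ * x)).comp x hin
  have h2 := h.const_mul (1 / κ ^ (l + 2))
  have hfun : (fun r : ℝ => r ^ (l + 2) * sphJ (l + 1) (κ * r))
      = fun r : ℝ => (1 / κ ^ (l + 2)) * (((fun y : ℝ => y ^ (l + 2) * sphJ (l + 1) y) ∘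
          fun r : ℝ => κ * r) r) := by
    funext r
    simp only [Function.comp_apply, mul_pow]
    field_simp
  rw [hfun]
  refine h2.congr_deriv ?_
  rw [mul_pow]
  field_simp

theorem sphJ_weighted_integral (R κ : ℝ) (hR : 0 < R) (hκ : 0 < κ) (n l : ℕ) :
    ∫ r in (0:ℝ)..R, (r ^ 2 - R ^ 2) ^ n * r ^ (l + 2) * sphJ l (κ * r)
      = (-2 : ℝ) ^ n * n.factorial * R ^ (l + n + 2) * sphJ (l + n + 1) (κ * R) / κ ^ (n + 1) := by
  induction n generalizing l with
  | zero =>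
      simp only [pow_zero, one_mul, Nat.factorial_zero, Nat.cast_one, add_zero]
      have hderiv : ∀ x ∈ Set.uIcc (0:ℝ) R,
          HasDerivAt (fun r : ℝ => r ^ (l + 2) * sphJ (l + 1) (κ * r) / κ)
            (x ^ (l + 2) * sphJ l (κ * x)) x := by
        intro x _
        have := (key_deriv_scaled l hκ.ne' x).div_const κ
        refine this.congr_deriv ?_
        field_simp
      have hint : IntervalIntegrable (fun x : ℝ => x ^ (l + 2) * sphJ l (κ * x))
          MeasureTheory.volume 0 R := by
        apply Continuous.intervalIntegrable
        exact (continuous_pow _).mul ((continuous_sphJ l).comp (continuous_const.mul continuous_id))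
      have := intervalIntegral.integral_eq_sub_of_hasDerivAt hderiv hint
      rw [this]
      rw [zero_pow (by omega : l + 2 ≠ 0)]
      simp only [zero_mul, zero_div, sub_zero]
      rw [pow_one]
  | succ n ih =>
      have hcont : ∀ m : ℕ, Continuous (fun r : ℝ => sphJ m (κ * r)) := fun m =>
        (continuous_sphJ m).comp (continuous_const.mul continuous_id)
      have hu : ∀ x ∈ Set.uIcc (0:ℝ) R,
          HasDerivAt (fun r : ℝ => (r ^ 2 - R ^ 2) ^ (n + 1))
            (((n:ℝ) + 1) * (x ^ 2 - R ^ 2) ^ n * (2 * x)) x := by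
        intro x _
        have hin : HasDerivAt (fun r : ℝ => r ^ 2 - R ^ 2) (2 * x) x := by
          simpa using (hasDerivAt_pow 2 x).sub_const (R ^ 2)
        have := hin.pow (n + 1)
        simp at this; exact this
      have hv : ∀ x ∈ Set.uIcc (0:ℝ) R,
          HasDerivAt (fun r : ℝ => r ^ (l + 2) * sphJ (l + 1) (κ * r) / κ)
            (x ^ (l + 2) * sphJ l (κ * x)) x := by
        intro x _
        have := (key_deriv_scaled l hκ.ne' x).div_const κ
        refine this.congr_deriv ?_
        field_simp
      have hu' : IntervalIntegrable (fun x : ℝ => ((n:ℝ) + 1) * (x ^ 2 - R ^ 2) ^ n * (2 * x))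
          MeasureTheory.volume 0 R := by
        apply Continuous.intervalIntegrable
        fun_prop
      have hv' : IntervalIntegrable (fun x : ℝ => x ^ (l + 2) * sphJ l (κ * x))
          MeasureTheory.volume 0 R := by
        apply Continuous.intervalIntegrable
        exact (continuous_pow _).mul (hcont l)
      have hibp := intervalIntegral.integral_mul_deriv_eq_deriv_mul hu hv hu' hv'
      have hL : ∫ r in (0:ℝ)..R, (r ^ 2 - R ^ 2) ^ (n + 1) * r ^ (l + 2) * sphJ l (κ * r)
          = ∫ r in (0:ℝ)..R, (r ^ 2 - R ^ 2) ^ (n + 1) * (r ^ (l + 2) * sphJ l (κ * r)) := by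
        apply intervalIntegral.integral_congr
        intro r _
        ring
      rw [hL, hibp]
      rw [zero_pow (by omega : l + 2 ≠ 0)]
      have hRR : (R ^ 2 - R ^ 2 : ℝ) ^ (n + 1) = 0 := by
        rw [sub_self, zero_pow (by omega : n + 1 ≠ 0)]
      rw [hRR]
      simp only [zero_mul, mul_zero, zero_div, sub_zero, zero_sub]
      have hI : ∫ r in (0:ℝ)..R,
            (((n:ℝ) + 1) * (r ^ 2 - R ^ 2) ^ n * (2 * r)) *
              (r ^ (l + 2) * sphJ (l + 1) (κ * r) / κ)
          = (2 * ((n:ℝ) + 1) / κ) *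
              ∫ r in (0:ℝ)..R, (r ^ 2 - R ^ 2) ^ n * r ^ (l + 1 + 2) * sphJ (l + 1) (κ * r) := by
        rw [← intervalIntegral.integral_const_mul]
        apply intervalIntegral.integral_congr
        intro r _
        have hpow : r ^ (l + 1 + 2) = r ^ (l + 2) * r := by rw [← pow_succ]
        simp only [hpow]
        field_simp
      rw [hI, ih (l + 1)]
      have hidx1 : l + 1 + n + 1 = l + (n + 1) + 1 := by omega
      have hidx2 : l + 1 + n + 2 = l + (n + 1) + 2 := by omega
      rw [hidx1, hidx2]
      rw [Nat.factorial_succ]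
      push_cast
      field_simp
      ring
end

section
/- For R > 0, λ > 0, K > 0 with K ≠ 0, and every natural number ℓ, the integral ∫₀^R i_ℓ(λr) j_ℓ(Kr) r² dr equals (R²/(K²+λ²)) · (K · i_ℓ(λR) · j_(ℓ+1)(KR) + λ · i_(ℓ+1)(λR) · j_ℓ(KR)). -/
open scoped Nat
open Polynomial

noncomputable def aI (l s : ℕ) : ℝ :=
  1 / (s.factorial * (ascPochhammer ℝ s).eval ((l : ℝ) + 3 / 2))

lemma aI_pos (l s : ℕ) : 0 < aI l s := by
  unfold aI
  have h1 := poch_pos l s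
  have h2 : (0:ℝ) < s.factorial := by positivity
  positivity

lemma aI_le (l s : ℕ) : aI l s ≤ 1 / s.factorial := by
  unfold aI
  have hp := one_le_poch l s
  have hf : (0:ℝ) < (s.factorial : ℝ) := by positivity
  rw [div_le_div_iff₀ (by nlinarith) hf]
  nlinarith

lemma poch_succ_left (s : ℕ) (c : ℝ) :
    (ascPochhammer ℝ (s+1)).eval c = c * (ascPochhammer ℝ s).eval (c + 1) := by
  rw [ascPochhammer_succ_left]
  simp [eval_comp]

lemma cast_succ_c (l : ℕ) : ((l+1 : ℕ) : ℝ) + 3/2 = ((l : ℝ) + 3/2) + 1 := by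
  push_cast; ring

lemma aI_succ (l s : ℕ) : (s+1 : ℝ) * aI l (s+1) = 2 / (2*(l:ℝ)+3) * aI (l+1) s := by
  have hc0 : (0:ℝ) < (l:ℝ)+3/2 := by positivity
  unfold aI
  rw [cast_succ_c, poch_succ_left, Nat.factorial_succ]
  set c : ℝ := (l:ℝ)+3/2 with hc
  set P : ℝ := (ascPochhammer ℝ s).eval (c+1) with hPdef
  have hP0 : 0 < P := by
    rw [hPdef, ← cast_succ_c]; exact poch_pos (l+1) s
  have h3 : 2*(l:ℝ)+3 = 2*c := by rw [hc]; ring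
  rw [h3]
  have hcast : (((s+1) * s.factorial : ℕ) : ℝ) = ((s:ℝ)+1) * s.factorial := by
    push_cast; ring
  rw [hcast]
  have hf : (0:ℝ) < (s.factorial:ℝ) := by positivity
  have hs1 : (0:ℝ) < (s:ℝ)+1 := by positivity
  field_simp

lemma aI_diff (l s : ℕ) : aI l s - aI (l+1) s = (2*(s:ℝ))/(2*(l:ℝ)+3) * aI (l+1) s := by
  have hc0 : (0:ℝ) < (l:ℝ)+3/2 := by positivity
  unfold aI
  rw [cast_succ_c]
  set c : ℝ := (l:ℝ)+3/2 with hc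
  set P : ℝ := (ascPochhammer ℝ s).eval c with hPdef
  set Q : ℝ := (ascPochhammer ℝ s).eval (c+1) with hQdef
  have hP0 : 0 < P := poch_pos l s
  have hQ0 : 0 < Q := by rw [hQdef, ← cast_succ_c]; exact poch_pos (l+1) s
  have h1 : (ascPochhammer ℝ (s+1)).eval c = c * Q := poch_succ_left s c
  have h2 : (ascPochhammer ℝ (s+1)).eval c = P * (c + s) := ascPochhammer_succ_eval s c
  have key : c * Q = P * (c + s) := by rw [← h1, h2]
  have h3 : 2*(l:ℝ)+3 = 2*c := by rw [hc]; ring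
  rw [h3]
  have hf : (0:ℝ) < (s.factorial:ℝ) := by positivity
  have hQc : Q = P * (c + s) / c := by
    field_simp
    linear_combination key
  rw [hQc]
  have hcs : (0:ℝ) < c + s := by positivity
  field_simp
  ring

noncomputable def co (ε : ℝ) (l s : ℕ) : ℝ := ε ^ s * aI l s

lemma co_abs {ε : ℝ} (hε : |ε| = 1) (l s : ℕ) : |co ε l s| = aI l s := by
  rw [co, abs_mul, abs_pow, hε, one_pow, one_mul, abs_of_pos (aI_pos l s)]

lemma co_succ (ε : ℝ) (l s : ℕ) :
    (s+1 : ℝ) * co ε l (s+1) = ε * (2 / (2*(l:ℝ)+3)) * co ε (l+1) s := by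
  simp only [co, pow_succ]
  have h := aI_succ l s
  linear_combination (ε ^ s * ε) * h

lemma co_diff (ε : ℝ) (l s : ℕ) :
    co ε l s - co ε (l+1) s = (2*(s:ℝ))/(2*(l:ℝ)+3) * co ε (l+1) s := by
  simp only [co]
  have h := aI_diff l s
  linear_combination (ε ^ s) * h

/-- master summability -/
lemma summable_master (c : ℕ → ℝ) (C q : ℝ) (h : ∀ s, |c s| ≤ C * q ^ s / s.factorial) :
    Summable c := by
  apply Summable.of_abs
  apply Summable.of_nonneg_of_le (fun s => abs_nonneg _) h
  simpa [mul_div_assoc] using (Real.summable_pow_div_factorial q).mul_left C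

lemma summable_co {ε : ℝ} (hε : |ε| = 1) (l : ℕ) (y : ℝ) :
    Summable (fun s => co ε l s * y ^ (2*s)) := by
  apply summable_master _ 1 (y^2)
  intro s
  rw [abs_mul, co_abs hε, pow_mul, abs_pow, abs_pow, one_mul, sq_abs]
  have h1 : (0:ℝ) ≤ (y^2)^s := by positivity
  have h2 := aI_le l s
  have h3 := aI_pos l s
  have hf : (0:ℝ) < (s.factorial:ℝ) := by positivity
  calc aI l s * (y^2)^s ≤ (1/s.factorial) * (y^2)^s := by nlinarith
    _ = (y^2)^s / s.factorial := by ring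

noncomputable def gf (ε : ℝ) (l : ℕ) (x : ℝ) : ℝ :=
  (((2*l+1)‼ : ℕ) : ℝ)⁻¹ * ∑' s : ℕ, co ε l s * (x/2) ^ (2*s)

lemma dfact_succ (l : ℕ) : (((2*(l+1)+1)‼ : ℕ) : ℝ) = (2*(l:ℝ)+3) * ((2*l+1)‼ : ℕ) := by
  have h : 2*(l+1)+1 = (2*l+1)+2 := by ring
  rw [h, Nat.doubleFactorial_add_two]
  push_cast; ring

lemma dfact_pos (l : ℕ) : (0:ℝ) < (((2*l+1)‼ : ℕ) : ℝ) := by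
  exact_mod_cast Nat.doubleFactorial_pos _

lemma hasDerivAt_gf (ε : ℝ) (hε : |ε| = 1) (l : ℕ) (x : ℝ) :
    HasDerivAt (gf ε l) (ε * x * gf ε (l+1) x) x := by
  set T : ℝ := |x| + 2 with hT
  have hT2 : (1:ℝ) ≤ T/2 := by
    have := abs_nonneg x; rw [hT]; linarith
  have hT0 : (0:ℝ) < T := by linarith
  have hxmem : x ∈ Metric.ball (0:ℝ) T := by
    simp only [Metric.mem_ball, Real.dist_eq, sub_zero]
    linarith
  set f : ℕ → ℝ → ℝ := fun s y => co ε l s * (y/2) ^ (2*s) with hf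
  set f' : ℕ → ℝ → ℝ := fun s y => co ε l s * (↑(2*s) * (y/2) ^ (2*s-1) * (1/2)) with hf'
  set u : ℕ → ℝ := fun s => (1/s.factorial) * (2*s) * (T/2) ^ (2*s-1) * (1/2) with hu
  have hderiv : ∀ s y, y ∈ Metric.ball (0:ℝ) T → HasDerivAt (f s) (f' s y) y := by
    intro s y _
    exact (((hasDerivAt_id y).div_const 2).pow (2*s)).const_mul (co ε l s)
  have hbound : ∀ s y, y ∈ Metric.ball (0:ℝ) T → ‖f' s y‖ ≤ u s := by
    intro s y hy
    simp only [Metric.mem_ball, Real.dist_eq, sub_zero] at hy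
    have hy2 : |y/2| ≤ T/2 := by
      rw [abs_div, abs_two]
      exact div_le_div_of_nonneg_right hy.le (by norm_num)
    have h1 : |f' s y| = aI l s * (2 * ↑s * |y/2| ^ (2*s-1) * (1/2)) := by
      rw [hf']
      simp only [abs_mul, abs_pow]
      rw [co_abs hε, abs_of_nonneg (by positivity : (0:ℝ) ≤ ((2*s : ℕ):ℝ)),
        abs_of_nonneg (by norm_num : (0:ℝ) ≤ (1:ℝ)/2)]
      push_cast
      ring
    rw [Real.norm_eq_abs, h1, hu]
    have hpow : |y/2| ^ (2*s-1) ≤ (T/2) ^ (2*s-1) :=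
      pow_le_pow_left₀ (abs_nonneg _) hy2 _
    have h2 := aI_le l s
    have hp0 : (0:ℝ) ≤ |y/2| ^ (2*s-1) := by positivity
    have hstep : aI l s * |y/2| ^ (2*s-1) ≤ 1/(s.factorial:ℝ) * (T/2) ^ (2*s-1) :=
      mul_le_mul h2 hpow hp0 (by positivity)
    calc aI l s * (2 * ↑s * |y/2| ^ (2*s-1) * (1/2))
        = (aI l s * |y/2| ^ (2*s-1)) * (s:ℝ) := by ring
      _ ≤ (1/(s.factorial:ℝ) * (T/2) ^ (2*s-1)) * (s:ℝ) :=
          mul_le_mul_of_nonneg_right hstep (Nat.cast_nonneg s)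
      _ = 1/(s.factorial:ℝ) * (2*↑s) * (T/2) ^ (2*s-1) * (1/2) := by ring
  have husum : Summable u := by
    apply summable_master _ (2/T) (2*(T/2)^2)
    intro s
    rw [hu]
    have hfp : (0:ℝ) < (s.factorial:ℝ) := by positivity
    have habs : |1/(s.factorial:ℝ) * (2*↑s) * (T/2) ^ (2*s-1) * (1/2)|
        = 1/(s.factorial:ℝ) * (2*↑s) * (T/2) ^ (2*s-1) * (1/2) := by
      apply abs_of_nonneg; positivity
    rw [habs]
    rcases Nat.eq_zero_or_pos s with hs | hs
    · subst hs; simp; positivity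
    · have hTne : T ≠ 0 := ne_of_gt hT0
      have hTid : (T/2) ^ (2*s-1) = ((T/2)^2) ^ s * (2/T) := by
        have h2s : 2*s = (2*s-1)+1 := by omega
        rw [← pow_mul, h2s, pow_succ]
        rw [Nat.add_sub_cancel, mul_assoc, div_mul_div_comm, mul_comm T 2, div_self (mul_ne_zero two_ne_zero hTne), mul_one]
      have h2 : (s:ℝ) ≤ 2^s := by exact_mod_cast (Nat.lt_two_pow_self (n := s)).le
      rw [hTid]
      have key : (s:ℝ) * (((T/2)^2)^s * (2/T)) ≤ 2^s * (((T/2)^2)^s * (2/T)) :=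
        mul_le_mul_of_nonneg_right h2 (by positivity)
      calc 1/(s.factorial:ℝ) * (2*↑s) * (((T/2)^2)^s * (2/T)) * (1/2)
          = ((s:ℝ) * (((T/2)^2)^s * (2/T))) / (s.factorial:ℝ) := by ring
        _ ≤ ((2:ℝ)^s * (((T/2)^2)^s * (2/T))) / (s.factorial:ℝ) := by
            apply div_le_div_of_nonneg_right key hfp.le
        _ = (2/T) * (2*(T/2)^2)^s / (s.factorial:ℝ) := by rw [mul_pow]; ring
  have hsum0 : Summable (fun s => f s x) := summable_co hε l (x/2)
  have hmain : HasDerivAt (fun y => ∑' s, f s y) (∑' s, f' s x) x :=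
    hasDerivAt_tsum_of_isPreconnected husum Metric.isOpen_ball
      (convex_ball (0:ℝ) T).isPreconnected hderiv hbound hxmem hsum0 hxmem
  have hsum' : Summable (fun s => f' s x) :=
    Summable.of_norm_bounded husum (fun s => hbound s x hxmem)
  have hterm : ∀ s : ℕ, f' (s+1) x = (ε * x / (2*(l:ℝ)+3)) * (co ε (l+1) s * (x/2)^(2*s)) := by
    intro s
    have hco := co_succ ε l s
    have hexp : 2*(s+1)-1 = 2*s+1 := by omega
    simp only [hf', hexp]
    push_cast
    linear_combination ((x/2)^(2*s+1)) * hco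
  have hzero : f' 0 x = 0 := by simp [hf']
  have hV : (((2*l+1)‼:ℕ):ℝ)⁻¹ * ∑' s, f' s x = ε * x * gf ε (l+1) x := by
    have hD : (((2*l+1)‼:ℕ):ℝ) ≠ 0 := ne_of_gt (dfact_pos l)
    have h3 : (2*(l:ℝ)+3) ≠ 0 := by positivity
    calc (((2*l+1)‼:ℕ):ℝ)⁻¹ * ∑' s, f' s x
        = (((2*l+1)‼:ℕ):ℝ)⁻¹ * ((ε*x/(2*(l:ℝ)+3)) * ∑' s, co ε (l+1) s * (x/2)^(2*s)) := by
          rw [Summable.tsum_eq_zero_add hsum', hzero, zero_add, tsum_congr hterm, tsum_mul_left]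
      _ = ε * x * gf ε (l+1) x := by
          simp only [gf, dfact_succ]
          rw [mul_inv]
          ring
  have heq : gf ε l = fun y => (((2*l+1)‼:ℕ):ℝ)⁻¹ * ∑' s, f s y := rfl
  rw [heq, ← hV]
  exact hmain.const_mul _

lemma co_zero (ε : ℝ) (m : ℕ) : co ε m 0 = 1 := by
  simp [co, aI]

lemma gf_rec {ε : ℝ} (hε : |ε| = 1) (l : ℕ) (x : ℝ) :
    gf ε l x = (2*(l:ℝ)+3) * gf ε (l+1) x + ε * x^2 * gf ε (l+2) x := by
  have h3 : (2*(l:ℝ)+3) ≠ 0 := by positivity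
  have h5 : (2*(l:ℝ)+5) ≠ 0 := by positivity
  have hD : (((2*l+1)‼:ℕ):ℝ) ≠ 0 := ne_of_gt (dfact_pos l)
  have hD2 : (((2*(l+2)+1)‼:ℕ):ℝ) = (2*(l:ℝ)+5) * ((2*(l+1)+1)‼:ℕ) := by
    have h := dfact_succ (l+1)
    have he : 2*((l+1)+1)+1 = 2*(l+2)+1 := by ring
    rw [he] at h
    rw [h]; push_cast; ring
  simp only [gf, hD2, dfact_succ l]
  set y : ℝ := x/2 with hy
  have hx2 : x^2 = 4*y^2 := by rw [hy]; ring
  have S : ∀ m, Summable (fun s => co ε m s * y^(2*s)) := fun m => summable_co hε m y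
  have hsub : Summable (fun s => (co ε l s - co ε (l+1) s) * y^(2*s)) := by
    have := (S l).sub (S (l+1))
    simpa [sub_mul] using this
  have hterm : ∀ s : ℕ, (co ε l (s+1) - co ε (l+1) (s+1)) * y^(2*(s+1))
      = (ε * (4*y^2) * (2*(l:ℝ)+3)⁻¹ * (2*(l:ℝ)+5)⁻¹) * (co ε (l+2) s * y^(2*s)) := by
    intro s
    have h1 := co_diff ε l (s+1)
    have h2 := co_succ ε (l+1) s
    push_cast at h1 h2
    linear_combination y^(2*(s+1)) * h1 + (2*(2*(l:ℝ)+3)⁻¹) * y^(2*(s+1)) * h2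
  have key : (∑' s, co ε l s * y^(2*s)) - (∑' s, co ε (l+1) s * y^(2*s))
      = ε * (4*y^2) * (2*(l:ℝ)+3)⁻¹ * (2*(l:ℝ)+5)⁻¹ * ∑' s, co ε (l+2) s * y^(2*s) := by
    rw [← Summable.tsum_sub (S l) (S (l+1))]
    have e1 : ∀ s : ℕ, co ε l s * y^(2*s) - co ε (l+1) s * y^(2*s)
        = (co ε l s - co ε (l+1) s) * y^(2*s) := fun s => by ring
    rw [tsum_congr e1, Summable.tsum_eq_zero_add hsub]
    simp only [co_zero, sub_self, zero_mul, zero_add]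
    rw [tsum_congr hterm, tsum_mul_left]
  have hS : (∑' s, co ε l s * y^(2*s))
      = (∑' s, co ε (l+1) s * y^(2*s))
        + ε * (4*y^2) * (2*(l:ℝ)+3)⁻¹ * (2*(l:ℝ)+5)⁻¹ * ∑' s, co ε (l+2) s * y^(2*s) := by
    linarith [key]
  rw [hS, hx2]
  field_simp

lemma sphI_eq (l : ℕ) (x : ℝ) : sphI l x = x^l * gf 1 l x := by
  rw [sphI, gf]
  have h : ∀ s:ℕ, (1 / ((s.factorial:ℝ) * (ascPochhammer ℝ s).eval ((l:ℝ)+3/2))) * (x/2)^(2*s)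
      = co 1 l s * (x/2)^(2*s) := by
    intro s; simp [co, aI]
  rw [tsum_congr h]
  ring

lemma sphJ_eq_s6 (l : ℕ) (x : ℝ) : sphJ l x = x^l * gf (-1) l x := by
  rw [sphJ, gf]
  have h : ∀ s:ℕ, ((-1:ℝ)^s / ((s.factorial:ℝ) * (ascPochhammer ℝ s).eval ((l:ℝ)+3/2))) * (x/2)^(2*s)
      = co (-1) l s * (x/2)^(2*s) := by
    intro s
    simp only [co, aI]
    rw [div_eq_mul_one_div]
  rw [tsum_congr h]
  ring

lemma gf_cont (ε : ℝ) (hε : |ε| = 1) (m : ℕ) : Continuous (gf ε m) := by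
  rw [continuous_iff_continuousAt]
  intro x
  exact (hasDerivAt_gf ε hε m x).differentiableAt.continuousAt

lemma habs1 : |(1:ℝ)| = 1 := by norm_num
lemma habsm1 : |(-1:ℝ)| = 1 := by norm_num


theorem sphI_sphJ_integral (R lam K : ℝ) (hR : 0 < R) (hlam : 0 < lam) (hK : 0 < K)
    (hK' : K ≠ 0) (l : ℕ) :
    ∫ r in (0:ℝ)..R, sphI l (lam * r) * sphJ l (K * r) * r ^ 2
      = R ^ 2 / (K ^ 2 + lam ^ 2) *
        (K * sphI l (lam * R) * sphJ (l + 1) (K * R)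
          + lam * sphI (l + 1) (lam * R) * sphJ l (K * R)) := by
  have hKl : K ^ 2 + lam ^ 2 ≠ 0 := by positivity
  set F : ℝ → ℝ := fun r => r ^ 2 / (K ^ 2 + lam ^ 2) *
        (K * sphI l (lam * r) * sphJ (l + 1) (K * r)
          + lam * sphI (l + 1) (lam * r) * sphJ l (K * r)) with hF
  have key : ∀ r : ℝ, HasDerivAt F (sphI l (lam*r) * sphJ l (K*r) * r^2) r := by
    intro r
    have hFG : F = fun t => (K^2+lam^2)⁻¹ *
        ((K^(l+2) * lam^l) * (t^(2*l+3) * (gf 1 l (lam*t) * gf (-1) (l+1) (K*t)))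
          + (lam^(l+2) * K^l) * (t^(2*l+3) * (gf 1 (l+1) (lam*t) * gf (-1) l (K*t)))) := by
      funext t
      rw [hF]
      simp only [sphI_eq, sphJ_eq_s6, mul_pow]
      ring
    rw [hFG]
    have hmul : ∀ c : ℝ, HasDerivAt (fun t : ℝ => c * t) c r := by
      intro c
      simpa using (hasDerivAt_id r).const_mul c
    have hIl : HasDerivAt (fun t => gf 1 l (lam*t)) ((1 * (lam*r) * gf 1 (l+1) (lam*r)) * lam) r := by
      simpa [Function.comp_def] using (hasDerivAt_gf 1 habs1 l (lam*r)).comp r (hmul lam)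
    have hIl1 : HasDerivAt (fun t => gf 1 (l+1) (lam*t)) ((1 * (lam*r) * gf 1 (l+2) (lam*r)) * lam) r := by
      simpa [Function.comp_def] using (hasDerivAt_gf 1 habs1 (l+1) (lam*r)).comp r (hmul lam)
    have hJl : HasDerivAt (fun t => gf (-1) l (K*t)) (((-1) * (K*r) * gf (-1) (l+1) (K*r)) * K) r := by
      simpa [Function.comp_def] using (hasDerivAt_gf (-1) habsm1 l (K*r)).comp r (hmul K)
    have hJl1 : HasDerivAt (fun t => gf (-1) (l+1) (K*t)) (((-1) * (K*r) * gf (-1) (l+2) (K*r)) * K) r := by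
      simpa [Function.comp_def] using (hasDerivAt_gf (-1) habsm1 (l+1) (K*r)).comp r (hmul K)
    have hpow : HasDerivAt (fun t:ℝ => t^(2*l+3)) ((((2*l+3):ℕ):ℝ) * r^(2*l+2)) r := by
      have h := hasDerivAt_pow (2*l+3) r
      have he : 2*l+3-1 = 2*l+2 := by omega
      rwa [he] at h
    have hA := hpow.mul (hIl.mul hJl1)
    have hB := hpow.mul (hIl1.mul hJl)
    have hG := ((hA.const_mul (K^(l+2) * lam^l)).add (hB.const_mul (lam^(l+2) * K^l))).const_mul ((K^2+lam^2)⁻¹)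
    convert hG using 1
    case e'_4 => rfl
    case e'_5 => rfl
    case e'_8 => rfl
    rw [sphI_eq, sphJ_eq_s6]
    simp only [Pi.mul_apply]
    rw [gf_rec habs1 l (lam*r), gf_rec habsm1 l (K*r)]
    push_cast
    field_simp
    ring
  have hcont : Continuous (fun r => sphI l (lam*r) * sphJ l (K*r) * r^2) := by
    have h1 : (fun r => sphI l (lam*r) * sphJ l (K*r) * r^2)
        = fun r => ((lam*r)^l * gf 1 l (lam*r)) * ((K*r)^l * gf (-1) l (K*r)) * r^2 := by
      funext r; rw [sphI_eq, sphJ_eq_s6]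
    rw [h1]
    have hc1 : Continuous fun r : ℝ => lam * r := continuous_const.mul continuous_id
    have hc2 : Continuous fun r : ℝ => K * r := continuous_const.mul continuous_id
    exact (((hc1.pow l).mul ((gf_cont 1 habs1 l).comp hc1)).mul
      ((hc2.pow l).mul ((gf_cont (-1) habsm1 l).comp hc2))).mul (continuous_pow 2)
  have hFTC := intervalIntegral.integral_eq_sub_of_hasDerivAt
    (f := F) (f' := fun r => sphI l (lam*r) * sphJ l (K*r) * r^2)
    (fun x _ => key x) (hcont.intervalIntegrable 0 R)
  rw [hFTC]
  have hF0 : F 0 = 0 := by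
    rw [hF]; norm_num
  rw [hF0, sub_zero, hF]
end
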